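/- For a Poisson random variable M with mean t > 0 and every nonnegative integer m, P(M < m) ≤ Φ(G(m)), where G(m) = sgn(m - t)·(2(t - m - m ln(t/m)))^{1/2} (with G(0) = -(2t)^{1/2}) and Φ is the standard Gaussian CDF. -/

import Mathlib

open Real MeasureTheory Set Filter Topology

noncomputable def phiG (z : ℝ) : ℝ := Real.exp (-z ^ 2 / 2) / Real.sqrt (2 * Real.pi)
noncomputable def PhiG (x : ℝ) : ℝ := ∫ z in Set.Iic x, phiG z

lemma phiG_eq (z : ℝ) : phiG z = Real.exp (-(1/2) * z ^ 2) * (Real.sqrt (2 * Real.pi))⁻¹ := by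
  rw [phiG, div_eq_mul_inv]; ring_nf

lemma phiG_pos (z : ℝ) : 0 < phiG z := by
  rw [phiG]; positivity

lemma continuous_phiG : Continuous phiG := by
  unfold phiG; fun_prop

lemma integrable_phiG : Integrable phiG := by
  have h := (integrable_exp_neg_mul_sq (b := 1/2) (by norm_num)).mul_const
    (Real.sqrt (2 * Real.pi))⁻¹
  exact h.congr (Eventually.of_forall fun z => (phiG_eq z).symm)

lemma integral_phiG : ∫ z, phiG z = 1 := by
  have h2π : (0:ℝ) < Real.sqrt (2 * Real.pi) := Real.sqrt_pos.mpr (by positivity)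
  simp_rw [phiG, integral_div]
  rw [show (fun z : ℝ => Real.exp (-z ^ 2 / 2)) = fun z : ℝ => Real.exp (-(1/2) * z ^ 2) by
    funext z; ring_nf]
  rw [integral_gaussian, show Real.pi / (1/2) = 2 * Real.pi by ring, div_self h2π.ne']

lemma PhiG_eq_add (y : ℝ) : PhiG y = PhiG 0 + ∫ z in (0:ℝ)..y, phiG z := by
  have := intervalIntegral.integral_Iic_sub_Iic (f := phiG) (μ := volume)
    integrable_phiG.integrableOn integrable_phiG.integrableOn (a := 0) (b := y)
  unfold PhiG
  linarith

lemma hasDerivAt_PhiG (x : ℝ) : HasDerivAt PhiG (phiG x) x := by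
  have key : HasDerivAt (fun u => PhiG 0 + ∫ z in (0:ℝ)..u, phiG z) (phiG x) x :=
    (intervalIntegral.integral_hasDerivAt_right integrable_phiG.intervalIntegrable
      (continuous_phiG.stronglyMeasurableAtFilter volume (𝓝 x))
      continuous_phiG.continuousAt).const_add (PhiG 0)
  exact key.congr_of_eventuallyEq (Eventually.of_forall fun y => (PhiG_eq_add y))

lemma tendsto_PhiG_atTop : Tendsto PhiG atTop (𝓝 1) := by
  have h := tendsto_setIntegral_of_monotone (μ := volume) (f := phiG)
    (s := fun x : ℝ => Iic x) (fun x => measurableSet_Iic)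
    (fun a b hab => Iic_subset_Iic.mpr hab) (by rw [iUnion_Iic]; exact integrable_phiG.integrableOn)
  rw [iUnion_Iic] at h
  simp only [Measure.restrict_univ, integral_phiG] at h
  exact h

lemma tendsto_PhiG_atBot : Tendsto PhiG atBot (𝓝 0) := by
  have h := tendsto_setIntegral_of_antitone (μ := volume) (f := phiG)
    (s := fun x : ℝ => Iic (-x)) (fun x => measurableSet_Iic)
    (fun a b hab => Iic_subset_Iic.mpr (by linarith))
    ⟨0, integrable_phiG.integrableOn⟩
  have hempty : (⋂ x : ℝ, Iic (-x)) = ∅ := by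
    apply eq_empty_iff_forall_notMem.mpr
    intro y hy
    have := mem_iInter.mp hy (-(y-1))
    simp at this; linarith
  rw [hempty] at h
  simp only [Measure.restrict_empty, integral_zero_measure] at h
  have : Tendsto (fun x : ℝ => -x) atBot atTop := tendsto_neg_atBot_atTop
  have h2 := h.comp this
  exact h2.congr fun x => by simp [Function.comp, PhiG, neg_neg]

noncomputable def Spo (m : ℕ) (s : ℝ) : ℝ :=
  ∑ k ∈ Finset.range m, Real.exp (-s) * s ^ k / (Nat.factorial k)

lemma hasDerivAt_expneg (s : ℝ) : HasDerivAt (fun s : ℝ => Real.exp (-s)) (-Real.exp (-s)) s := by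
  have := (Real.hasDerivAt_exp (-s)).comp s (hasDerivAt_neg s)
  simpa [Function.comp_def] using this

lemma hasDerivAt_term (k : ℕ) (s : ℝ) :
    HasDerivAt (fun s => Real.exp (-s) * s ^ k / (Nat.factorial k))
      ((Real.exp (-s) * ((k : ℝ) * s ^ (k - 1)) - Real.exp (-s) * s ^ k) / (Nat.factorial k)) s := by
  have h := ((hasDerivAt_expneg s).mul (hasDerivAt_pow k s)).div_const (Nat.factorial k : ℝ)
  convert h using 1 <;> try rfl
  ring

lemma hasDerivAt_Spo (n : ℕ) (s : ℝ) :
    HasDerivAt (Spo (n + 1)) (-(Real.exp (-s) * s ^ n / (Nat.factorial n))) s := by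
  induction n with
  | zero =>
      have h := hasDerivAt_expneg s
      have : Spo 1 = fun s : ℝ => Real.exp (-s) := by
        funext u; simp [Spo]
      rw [this]
      simpa using h
  | succ n ih =>
      have hsum : Spo (n + 2) = fun s =>
          Spo (n + 1) s + Real.exp (-s) * s ^ (n + 1) / (Nat.factorial (n + 1)) := by
        funext u; rw [Spo, Finset.sum_range_succ]; rfl
      rw [hsum]
      have h := ih.add (hasDerivAt_term (n + 1) s)
      convert h using 1 <;> try rfl
      have hfac : (Nat.factorial (n + 1) : ℝ) = (n + 1) * Nat.factorial n := by
        rw [Nat.factorial_succ]; push_cast; ring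
      have hfn : (Nat.factorial n : ℝ) ≠ 0 := Nat.cast_ne_zero.mpr (Nat.factorial_ne_zero n)
      have hfn1 : (Nat.factorial (n+1) : ℝ) ≠ 0 := Nat.cast_ne_zero.mpr (Nat.factorial_ne_zero _)
      rw [Nat.add_sub_cancel, hfac]; push_cast
      field_simp
      ring

lemma continuous_Spo (m : ℕ) : Continuous (Spo m) := by
  unfold Spo
  exact continuous_finset_sum _ fun k _ => by fun_prop

lemma Spo_zero (m : ℕ) (hm : 1 ≤ m) : Spo m 0 = 1 := by
  unfold Spo
  rw [Finset.sum_eq_single 0]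
  · simp
  · intro k _ hk
    simp [zero_pow hk]
  · intro h; exact absurd (Finset.mem_range.mpr hm) h

lemma tendsto_Spo_atTop (m : ℕ) : Tendsto (Spo m) atTop (𝓝 0) := by
  unfold Spo
  have : Tendsto (fun s : ℝ => ∑ k ∈ Finset.range m, Real.exp (-s) * s ^ k / (Nat.factorial k))
      atTop (𝓝 (∑ k ∈ Finset.range m, 0)) := by
    apply tendsto_finset_sum
    intro k _
    have h := (tendsto_pow_mul_exp_neg_atTop_nhds_zero k).div_const (Nat.factorial k : ℝ)
    simp only [zero_div] at h
    exact h.congr fun s => by ring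
  simpa using this

/-! ### Part C: the function D, G and derivative computations -/

noncomputable def Dfun (m : ℕ) (s : ℝ) : ℝ := s - m - m * Real.log (s / m)

lemma Dfun_nonneg {m : ℕ} (hm : 1 ≤ m) {s : ℝ} (hs : 0 < s) : 0 ≤ Dfun m s := by
  have hmr : (0:ℝ) < m := by exact_mod_cast hm
  have h := Real.log_le_sub_one_of_pos (x := s / m) (by positivity)
  have h2 : (m:ℝ) * Real.log (s / m) ≤ (m:ℝ) * (s / m - 1) := by
    exact mul_le_mul_of_nonneg_left h (le_of_lt hmr)
  have h3 : (m:ℝ) * (s / m - 1) = s - m := by field_simp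
  unfold Dfun; linarith [h3 ▸ h2]

lemma Dfun_pos {m : ℕ} (hm : 1 ≤ m) {s : ℝ} (hs : 0 < s) (hne : s ≠ (m:ℝ)) :
    0 < Dfun m s := by
  have hmr : (0:ℝ) < m := by exact_mod_cast hm
  have h := Real.log_lt_sub_one_of_pos (x := s / m) (by positivity)
    (by
      intro hc
      apply hne
      field_simp at hc
      linarith)
  have h2 : (m:ℝ) * Real.log (s / m) < (m:ℝ) * (s / m - 1) :=
    mul_lt_mul_of_pos_left h hmr
  have h3 : (m:ℝ) * (s / m - 1) = s - m := by field_simp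
  unfold Dfun; linarith [h3 ▸ h2]

lemma Dfun_at_m {m : ℕ} (hm : 1 ≤ m) : Dfun m (m:ℝ) = 0 := by
  have hmr : (0:ℝ) < m := by exact_mod_cast hm
  unfold Dfun
  rw [div_self hmr.ne', Real.log_one]
  ring

lemma hasDerivAt_Dfun {m : ℕ} (hm : 1 ≤ m) {s : ℝ} (hs : 0 < s) :
    HasDerivAt (Dfun m) (1 - m / s) s := by
  have hmr : (0:ℝ) < m := by exact_mod_cast hm
  have h1 : HasDerivAt (fun u : ℝ => u / m) (1 / m) s := by
    simpa using (hasDerivAt_id s).div_const (m:ℝ)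
  have h2 : HasDerivAt (fun u : ℝ => Real.log (u / m)) ((1 / m) / (s / m)) s :=
    h1.log (by positivity)
  have h3 : (1 / (m:ℝ)) / (s / m) = 1 / s := by field_simp
  rw [h3] at h2
  have h4 := ((hasDerivAt_id s).sub_const (m:ℝ)).sub (h2.const_mul (m:ℝ))
  have : (1:ℝ) - m * (1 / s) = 1 - m / s := by ring
  rw [this] at h4
  exact h4.congr_of_eventuallyEq (Eventually.of_forall fun u => rfl)

lemma continuousOn_Dfun {m : ℕ} (hm : 1 ≤ m) :
    ContinuousOn (Dfun m) (Set.Ioi 0) := by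
  intro s hs
  exact ((hasDerivAt_Dfun hm hs).continuousAt).continuousWithinAt

lemma hasDerivAt_sqrtD {m : ℕ} (hm : 1 ≤ m) {s : ℝ} (hs : 0 < s) (hne : s ≠ (m:ℝ)) :
    HasDerivAt (fun u => Real.sqrt (2 * Dfun m u))
      ((1 - m / s) / Real.sqrt (2 * Dfun m s)) s := by
  have hD := Dfun_pos hm hs hne
  have h1 : HasDerivAt (fun u => 2 * Dfun m u) (2 * (1 - m / s)) s :=
    (hasDerivAt_Dfun hm hs).const_mul 2
  have h2 := h1.sqrt (by positivity)
  convert h2 using 1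
  have hQ : Real.sqrt (2 * Dfun m s) ≠ 0 := by positivity
  field_simp

/-! ### Part D: the constant `cpo` and Stirling's bound -/

noncomputable def cpo (m : ℕ) : ℝ := (Nat.factorial (m-1) : ℝ) * Real.exp m / (m:ℝ)^m

lemma cpo_pos {m : ℕ} (hm : 1 ≤ m) : 0 < cpo m := by
  have hmr : (0:ℝ) < m := by exact_mod_cast hm
  unfold cpo
  have := Nat.factorial_pos (m-1)
  positivity

lemma stirling_cpo {m : ℕ} (hm : 1 ≤ m) : 2 * Real.pi ≤ (cpo m)^2 * m := by
  obtain ⟨n, rfl⟩ : ∃ n, m = n + 1 := ⟨m - 1, (Nat.succ_pred_eq_of_pos hm).symm⟩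
  set m := n + 1
  have hmr : (0:ℝ) < m := by positivity
  have ha : Antitone (Stirling.stirlingSeq ∘ Nat.succ) := Stirling.stirlingSeq'_antitone
  have ht : Tendsto (Stirling.stirlingSeq ∘ Nat.succ) atTop (𝓝 (Real.sqrt Real.pi)) :=
    Stirling.tendsto_stirlingSeq_sqrt_pi.comp (tendsto_add_atTop_nat 1)
  have h1 : Real.sqrt Real.pi ≤ Stirling.stirlingSeq m := ha.le_of_tendsto ht n
  rw [Stirling.stirlingSeq] at h1
  have hden : (0:ℝ) < Real.sqrt (2 * m) * ((m:ℝ) / Real.exp 1) ^ m := by positivity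
  have hfac : Real.sqrt Real.pi * (Real.sqrt (2 * m) * ((m:ℝ) / Real.exp 1) ^ m)
      ≤ (Nat.factorial m : ℝ) := by
    rw [← le_div_iff₀ hden]
    exact h1
  have hexp : ((m:ℝ) / Real.exp 1) ^ m * Real.exp m = (m:ℝ) ^ m := by
    rw [div_pow, ← Real.exp_one_rpow (m:ℝ), ← Real.rpow_natCast (Real.exp 1) m]
    field_simp
  -- `cpo m = m! * exp m / m^(m+1)`
  have hcpo : cpo m = (Nat.factorial m : ℝ) * Real.exp m / ((m:ℝ) ^ m * m) := by
    unfold cpo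
    have : (Nat.factorial m : ℝ) = m * (Nat.factorial (m - 1) : ℝ) := by
      show ((Nat.factorial (n+1) : ℝ)) = _
      rw [Nat.factorial_succ]
      push_cast
      simp [m]
    rw [this]
    field_simp
  have hc : Real.sqrt Real.pi * Real.sqrt (2 * m) / m ≤ cpo m := by
    rw [hcpo]
    rw [div_le_div_iff₀ hmr (by positivity)]
    have h2 := mul_le_mul_of_nonneg_right hfac (le_of_lt (Real.exp_pos m))
    calc Real.sqrt Real.pi * Real.sqrt (2 * m) * ((m:ℝ) ^ m * m)
        = (Real.sqrt Real.pi * (Real.sqrt (2 * m) * ((m:ℝ) / Real.exp 1) ^ m) * Real.exp m) * m := by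
          rw [show Real.sqrt Real.pi * (Real.sqrt (2 * ↑m) * ((m:ℝ) / Real.exp 1) ^ m) * Real.exp m
            = Real.sqrt Real.pi * Real.sqrt (2 * ↑m) * (((m:ℝ) / Real.exp 1) ^ m * Real.exp m) by ring, hexp]
          ring
      _ ≤ ((Nat.factorial m : ℝ) * Real.exp m) * m := by
          apply mul_le_mul_of_nonneg_right h2 hmr.le
  have hsq1 : Real.sqrt Real.pi ^ 2 = Real.pi := Real.sq_sqrt Real.pi_pos.le
  have hsq2 : Real.sqrt (2 * m) ^ 2 = 2 * m := Real.sq_sqrt (by positivity)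
  have hlhs : (0:ℝ) ≤ Real.sqrt Real.pi * Real.sqrt (2 * m) / m := by positivity
  have hsq : (Real.sqrt Real.pi * Real.sqrt (2 * m) / m)^2 ≤ (cpo m)^2 := by
    apply pow_le_pow_left₀ hlhs hc
  have hval : (Real.sqrt Real.pi * Real.sqrt (2 * m) / m)^2 = 2 * Real.pi / m := by
    have e1 : (Real.sqrt Real.pi * Real.sqrt (2 * m) / m)^2
        = (Real.sqrt Real.pi)^2 * (Real.sqrt (2 * m))^2 / (m:ℝ)^2 := by ring
    rw [e1, hsq1, hsq2]
    field_simp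
  rw [hval] at hsq
  rw [div_le_iff₀ hmr] at hsq
  linarith

/-! ### Part E: the comparison function `hpo` -/

noncomputable def hpo (m : ℕ) (s : ℝ) : ℝ :=
  4 * Real.pi * Dfun m s - (cpo m)^2 * (s - m)^2

lemma hpo_at_m {m : ℕ} (hm : 1 ≤ m) : hpo m (m:ℝ) = 0 := by
  unfold hpo; rw [Dfun_at_m hm]; ring

lemma hasDerivAt_hpo {m : ℕ} (hm : 1 ≤ m) {s : ℝ} (hs : 0 < s) :
    HasDerivAt (hpo m) ((s - m) * (4 * Real.pi / s - 2 * (cpo m)^2)) s := by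
  have h1 := (hasDerivAt_Dfun hm hs).const_mul (4 * Real.pi)
  have h2 : HasDerivAt (fun u : ℝ => (cpo m)^2 * (u - m)^2)
      ((cpo m)^2 * (2 * (s - m))) s := by
    have := (((hasDerivAt_id s).sub_const (m:ℝ)).pow 2).const_mul ((cpo m)^2)
    simpa using this
  have h3 := h1.sub h2
  convert h3 using 1 <;> try rfl
  field_simp

lemma continuousOn_hpo {m : ℕ} (hm : 1 ≤ m) : ContinuousOn (hpo m) (Set.Ioi 0) :=
  fun s hs => ((hasDerivAt_hpo hm hs).continuousAt).continuousWithinAt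

lemma tstar_le {m : ℕ} (hm : 1 ≤ m) : 2 * Real.pi / (cpo m)^2 ≤ m := by
  have hc := cpo_pos hm
  rw [div_le_iff₀ (by positivity)]
  have := stirling_cpo hm
  linarith [this]

lemma tstar_pos {m : ℕ} (hm : 1 ≤ m) : 0 < 2 * Real.pi / (cpo m)^2 := by
  have hc := cpo_pos hm
  positivity

/-- `hpo` is antitone on `[a, b]` whenever `0 < a` and `b ≤ 2π/c²`. -/
lemma hpo_anti_low {m : ℕ} (hm : 1 ≤ m) {a b : ℝ} (ha : 0 < a)
    (hb : b ≤ 2 * Real.pi / (cpo m)^2) :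
    AntitoneOn (hpo m) (Set.Icc a b) := by
  have hc := cpo_pos hm
  apply antitoneOn_of_deriv_nonpos (convex_Icc a b)
  · exact (continuousOn_hpo hm).mono (fun x hx => lt_of_lt_of_le ha hx.1)
  · intro x hx
    rw [interior_Icc] at hx
    exact ((hasDerivAt_hpo hm (lt_trans ha hx.1)).differentiableAt).differentiableWithinAt
  · intro x hx
    rw [interior_Icc] at hx
    have hx0 : 0 < x := lt_trans ha hx.1
    rw [(hasDerivAt_hpo hm hx0).deriv]
    have hxt : x < 2 * Real.pi / (cpo m)^2 := lt_of_lt_of_le hx.2 hb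
    have hxm : x < m := lt_of_lt_of_le hxt (tstar_le hm)
    have h1 : 0 ≤ 4 * Real.pi / x - 2 * (cpo m)^2 := by
      rw [sub_nonneg, le_div_iff₀ hx0]
      rw [lt_div_iff₀ (by positivity)] at hxt
      linarith
    have h2 : x - m ≤ 0 := by linarith
    exact mul_nonpos_of_nonpos_of_nonneg h2 h1

/-- `hpo` is monotone on `[2π/c², m]`. -/
lemma hpo_mono_mid {m : ℕ} (hm : 1 ≤ m) :
    MonotoneOn (hpo m) (Set.Icc (2 * Real.pi / (cpo m)^2) (m:ℝ)) := by
  have hc := cpo_pos hm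
  have ht0 := tstar_pos hm
  apply monotoneOn_of_deriv_nonneg (convex_Icc _ _)
  · exact (continuousOn_hpo hm).mono (fun x hx => lt_of_lt_of_le ht0 hx.1)
  · intro x hx
    rw [interior_Icc] at hx
    exact ((hasDerivAt_hpo hm (lt_trans ht0 hx.1)).differentiableAt).differentiableWithinAt
  · intro x hx
    rw [interior_Icc] at hx
    have hx0 : 0 < x := lt_trans ht0 hx.1
    rw [(hasDerivAt_hpo hm hx0).deriv]
    have hx1 : 2 * Real.pi / (cpo m)^2 < x := hx.1
    have hx2 : x < (m:ℝ) := hx.2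
    rw [div_lt_iff₀ (by positivity)] at hx1
    have h1 : 4 * Real.pi / x - 2 * (cpo m)^2 ≤ 0 := by
      rw [sub_nonpos, div_le_iff₀ hx0]
      nlinarith [hx1]
    have h2 : x - m ≤ 0 := by linarith
    nlinarith [mul_nonneg (neg_nonneg.mpr h2) (neg_nonneg.mpr h1)]

/-- `hpo` is antitone on `[m, ∞)`. -/
lemma hpo_anti_high {m : ℕ} (hm : 1 ≤ m) :
    AntitoneOn (hpo m) (Set.Ici (m:ℝ)) := by
  have hc := cpo_pos hm
  have hmr : (0:ℝ) < m := by exact_mod_cast hm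
  apply antitoneOn_of_deriv_nonpos (convex_Ici _)
  · exact (continuousOn_hpo hm).mono (fun x hx => lt_of_lt_of_le hmr hx)
  · intro x hx
    rw [interior_Ici] at hx
    exact ((hasDerivAt_hpo hm (lt_trans hmr hx)).differentiableAt).differentiableWithinAt
  · intro x hx
    rw [interior_Ici] at hx
    have hx0 : 0 < x := lt_trans hmr hx
    have hmx : (m:ℝ) < x := hx
    rw [(hasDerivAt_hpo hm hx0).deriv]
    have hts := tstar_le hm
    have h1 : 4 * Real.pi / x - 2 * (cpo m)^2 ≤ 0 := by
      rw [sub_nonpos, div_le_iff₀ hx0]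
      rw [div_le_iff₀ (by positivity)] at hts
      nlinarith [mul_le_mul_of_nonneg_left (le_of_lt hmx)
        (by positivity : (0:ℝ) ≤ 2 * (cpo m)^2)]
    have h2 : 0 ≤ x - m := by linarith
    exact mul_nonpos_of_nonneg_of_nonpos h2 h1

lemma hpo_nonpos_of_ge {m : ℕ} (hm : 1 ≤ m) {s : ℝ} (hs : (m:ℝ) ≤ s) : hpo m s ≤ 0 := by
  have := hpo_anti_high hm (Set.self_mem_Ici) (Set.mem_Ici.mpr hs) hs
  rw [hpo_at_m hm] at this
  exact this

lemma hpo_nonpos_mid {m : ℕ} (hm : 1 ≤ m) {s : ℝ}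
    (h1 : 2 * Real.pi / (cpo m)^2 ≤ s) (h2 : s ≤ m) : hpo m s ≤ 0 := by
  have := hpo_mono_mid hm (Set.mem_Icc.mpr ⟨h1, h2⟩)
    (Set.mem_Icc.mpr ⟨(tstar_le hm), le_refl _⟩) h2
  rw [hpo_at_m hm] at this
  exact this

/-- If `hpo m t ≤ 0` then `hpo m s ≤ 0` for all `s ≥ t`. -/
lemma hpo_nonpos_forward {m : ℕ} (hm : 1 ≤ m) {t : ℝ} (ht : 0 < t)
    (hle : hpo m t ≤ 0) : ∀ s, t ≤ s → hpo m s ≤ 0 := by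
  intro s hs
  rcases le_or_gt (m:ℝ) s with hms | hms
  · exact hpo_nonpos_of_ge hm hms
  rcases le_or_gt (2 * Real.pi / (cpo m)^2) s with hts | hts
  · exact hpo_nonpos_mid hm hts hms.le
  · have := hpo_anti_low hm (b := 2 * Real.pi / (cpo m)^2) ht (le_refl _)
      (Set.mem_Icc.mpr ⟨le_refl _, le_trans hs hts.le⟩)
      (Set.mem_Icc.mpr ⟨hs, hts.le⟩) hs
    linarith

/-- If `hpo m t > 0` then `t < m` and `hpo m s > 0` for all `0 < s ≤ t`. -/
lemma hpo_pos_backward {m : ℕ} (hm : 1 ≤ m) {t : ℝ} (ht : 0 < t)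
    (hpos : 0 < hpo m t) : t < m ∧ ∀ s, 0 < s → s ≤ t → 0 < hpo m s := by
  have htstar : t < 2 * Real.pi / (cpo m)^2 := by
    by_contra hcon
    push_neg at hcon
    rcases le_or_gt (m:ℝ) t with h | h
    · linarith [hpo_nonpos_of_ge hm h]
    · linarith [hpo_nonpos_mid hm hcon h.le]
  have htm : t < m := lt_of_lt_of_le htstar (tstar_le hm)
  refine ⟨htm, fun s hs hst => ?_⟩
  have := hpo_anti_low hm (b := t) hs (le_of_lt htstar)
    (Set.mem_Icc.mpr ⟨le_refl _, hst⟩) (Set.mem_Icc.mpr ⟨hst, le_refl _⟩) hst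
  linarith

/-! ### Part F: the branch functions and derivative signs -/

lemma phiG_neg (x : ℝ) : phiG (-x) = phiG x := by
  unfold phiG; rw [neg_pow]; norm_num

lemma phiG_val {m : ℕ} (hm : 1 ≤ m) {s : ℝ} (hs : 0 < s) :
    phiG (Real.sqrt (2 * Dfun m s)) =
      Real.exp (-s) * Real.exp m * (s / m) ^ m / Real.sqrt (2 * Real.pi) := by
  have hmr : (0:ℝ) < m := by exact_mod_cast hm
  have hD := Dfun_nonneg hm hs
  have hsq : Real.sqrt (2 * Dfun m s) ^ 2 = 2 * Dfun m s := Real.sq_sqrt (by linarith)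
  unfold phiG
  congr 1
  rw [hsq]
  have h1 : -(2 * Dfun m s) / 2 = -(Dfun m s) := by ring
  rw [h1]
  unfold Dfun
  rw [show -(s - (m:ℝ) - m * Real.log (s / m)) = -s + (m + m * Real.log (s / m)) by ring,
    Real.exp_add, Real.exp_add, mul_assoc]
  congr 1
  congr 1
  rw [show (m:ℝ) * Real.log (s / m) = Real.log (s / m) * m by ring]
  rw [Real.exp_mul, Real.exp_log (by positivity), Real.rpow_natCast]

lemma continuous_PhiG : Continuous PhiG :=
  continuous_iff_continuousAt.mpr fun x => (hasDerivAt_PhiG x).continuousAt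

noncomputable def fpos (m : ℕ) (s : ℝ) : ℝ :=
  PhiG (Real.sqrt (2 * Dfun m s)) - Spo m s

noncomputable def fneg (m : ℕ) (s : ℝ) : ℝ :=
  PhiG (-Real.sqrt (2 * Dfun m s)) - Spo m s

lemma hasDerivAt_fpos (n : ℕ) {s : ℝ} (hs : 0 < s) (hne : s ≠ ((n+1:ℕ):ℝ)) :
    HasDerivAt (fpos (n+1))
      (phiG (Real.sqrt (2 * Dfun (n+1) s)) *
        ((1 - ((n+1:ℕ):ℝ) / s) / Real.sqrt (2 * Dfun (n+1) s))
        + Real.exp (-s) * s ^ n / (Nat.factorial n)) s := by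
  have h1 := (hasDerivAt_PhiG (Real.sqrt (2 * Dfun (n+1) s))).comp s
    (hasDerivAt_sqrtD (m := n+1) (by omega) hs hne)
  have h2 := h1.sub (hasDerivAt_Spo n s)
  convert h2 using 1 <;> try rfl
  ring

lemma hasDerivAt_fneg (n : ℕ) {s : ℝ} (hs : 0 < s) (hne : s ≠ ((n+1:ℕ):ℝ)) :
    HasDerivAt (fneg (n+1))
      (phiG (-Real.sqrt (2 * Dfun (n+1) s)) *
        (-((1 - ((n+1:ℕ):ℝ) / s) / Real.sqrt (2 * Dfun (n+1) s)))
        + Real.exp (-s) * s ^ n / (Nat.factorial n)) s := by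
  have h1 := (hasDerivAt_PhiG (-Real.sqrt (2 * Dfun (n+1) s))).comp s
    (hasDerivAt_sqrtD (m := n+1) (by omega) hs hne).neg
  have h2 := h1.sub (hasDerivAt_Spo n s)
  convert h2 using 1 <;> try rfl
  ring

/-- Central algebraic comparison: relates the sign of the derivative to `hpo`. -/
lemma deriv_decomp (n : ℕ) {s : ℝ} (hs : 0 < s) (hne : s ≠ ((n+1:ℕ):ℝ)) :
    ∀ sgn : ℝ, sgn = 1 ∨ sgn = -1 →
    phiG (Real.sqrt (2 * Dfun (n+1) s)) *
        (sgn * ((1 - ((n+1:ℕ):ℝ) / s) / Real.sqrt (2 * Dfun (n+1) s)))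
        + Real.exp (-s) * s ^ n / (Nat.factorial n)
      = (Real.exp (-s) * s ^ n) /
          ((Nat.factorial n : ℝ) * (((n+1:ℕ):ℝ) ^ (n+1) * Real.sqrt (2 * Real.pi) *
            Real.sqrt (2 * Dfun (n+1) s)))
        * (((n+1:ℕ):ℝ) ^ (n+1) * Real.sqrt (2 * Real.pi) * Real.sqrt (2 * Dfun (n+1) s)
            - sgn * ((Nat.factorial n : ℝ) * Real.exp ((n+1:ℕ):ℝ) * (((n+1:ℕ):ℝ) - s))) := by
  intro sgn hsgn
  have hm : 1 ≤ n + 1 := by omega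
  have hmr : (0:ℝ) < ((n+1:ℕ):ℝ) := by positivity
  have hD : 0 < Dfun (n+1) s := Dfun_pos hm hs hne
  have hQ : 0 < Real.sqrt (2 * Dfun (n+1) s) := Real.sqrt_pos.mpr (by linarith)
  have hP : 0 < Real.sqrt (2 * Real.pi) := Real.sqrt_pos.mpr (by positivity)
  have hF : (0:ℝ) < (Nat.factorial n : ℝ) := by exact_mod_cast Nat.factorial_pos n
  rw [phiG_val hm hs]
  rw [div_pow, pow_succ]
  field_simp
  ring

/-! ### Part G: square comparison -/

lemma sq_identity (n : ℕ) {s : ℝ} (hs : 0 < s) :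
    (((n+1:ℕ):ℝ) ^ (n+1) * Real.sqrt (2 * Real.pi) * Real.sqrt (2 * Dfun (n+1) s))^2
      - ((Nat.factorial n : ℝ) * Real.exp ((n+1:ℕ):ℝ))^2 * (((n+1:ℕ):ℝ) - s)^2
      = (((n+1:ℕ):ℝ) ^ (n+1))^2 * hpo (n+1) s := by
  have hm : 1 ≤ n + 1 := by omega
  have hD := Dfun_nonneg hm hs
  have h1 : Real.sqrt (2 * Real.pi) ^ 2 = 2 * Real.pi := Real.sq_sqrt (by positivity)
  have h2 : Real.sqrt (2 * Dfun (n+1) s) ^ 2 = 2 * Dfun (n+1) s := Real.sq_sqrt (by linarith)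
  have hMne : (((n+1:ℕ):ℝ) ^ (n+1)) ≠ 0 := by positivity
  have hcsq : (cpo (n+1))^2 * (((n+1:ℕ):ℝ) ^ (n+1))^2
      = ((Nat.factorial n : ℝ) * Real.exp ((n+1:ℕ):ℝ))^2 := by
    unfold cpo
    rw [Nat.add_sub_cancel]
    field_simp
  unfold hpo
  rw [mul_pow, mul_pow, h1, h2]
  linear_combination (((n+1:ℕ):ℝ) - s)^2 * hcsq

lemma X_le_Y (n : ℕ) {s : ℝ} (hs : 0 < s) (hh : hpo (n+1) s ≤ 0) :
    ((n+1:ℕ):ℝ) ^ (n+1) * Real.sqrt (2 * Real.pi) * Real.sqrt (2 * Dfun (n+1) s)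
      ≤ (Nat.factorial n : ℝ) * Real.exp ((n+1:ℕ):ℝ) * |((n+1:ℕ):ℝ) - s| := by
  have hid := sq_identity n hs
  have hX : 0 ≤ ((n+1:ℕ):ℝ) ^ (n+1) * Real.sqrt (2 * Real.pi) * Real.sqrt (2 * Dfun (n+1) s) := by
    positivity
  have hY : 0 ≤ (Nat.factorial n : ℝ) * Real.exp ((n+1:ℕ):ℝ) * |((n+1:ℕ):ℝ) - s| := by
    positivity
  rw [← pow_le_pow_iff_left₀ hX hY two_ne_zero]
  have habs : ((Nat.factorial n : ℝ) * Real.exp ((n+1:ℕ):ℝ) * |((n+1:ℕ):ℝ) - s|)^2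
      = ((Nat.factorial n : ℝ) * Real.exp ((n+1:ℕ):ℝ))^2 * (((n+1:ℕ):ℝ) - s)^2 := by
    rw [mul_pow, sq_abs]
  rw [habs]
  nlinarith [hid, sq_nonneg (((n+1:ℕ):ℝ) ^ (n+1)), mul_nonpos_of_nonneg_of_nonpos
    (sq_nonneg (((n+1:ℕ):ℝ) ^ (n+1))) hh]

lemma Y_le_X (n : ℕ) {s : ℝ} (hs : 0 < s) (hh : 0 ≤ hpo (n+1) s) :
    (Nat.factorial n : ℝ) * Real.exp ((n+1:ℕ):ℝ) * |((n+1:ℕ):ℝ) - s|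
      ≤ ((n+1:ℕ):ℝ) ^ (n+1) * Real.sqrt (2 * Real.pi) * Real.sqrt (2 * Dfun (n+1) s) := by
  have hid := sq_identity n hs
  have hX : 0 ≤ ((n+1:ℕ):ℝ) ^ (n+1) * Real.sqrt (2 * Real.pi) * Real.sqrt (2 * Dfun (n+1) s) := by
    positivity
  have hY : 0 ≤ (Nat.factorial n : ℝ) * Real.exp ((n+1:ℕ):ℝ) * |((n+1:ℕ):ℝ) - s| := by
    positivity
  rw [← pow_le_pow_iff_left₀ hY hX two_ne_zero]
  have habs : ((Nat.factorial n : ℝ) * Real.exp ((n+1:ℕ):ℝ) * |((n+1:ℕ):ℝ) - s|)^2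
      = ((Nat.factorial n : ℝ) * Real.exp ((n+1:ℕ):ℝ))^2 * (((n+1:ℕ):ℝ) - s)^2 := by
    rw [mul_pow, sq_abs]
  rw [habs]
  nlinarith [hid, mul_nonneg (sq_nonneg (((n+1:ℕ):ℝ) ^ (n+1))) hh]

/-! ### Part H: monotonicity of the branch functions -/

lemma continuousOn_sqrtD {m : ℕ} (hm : 1 ≤ m) :
    ContinuousOn (fun s => Real.sqrt (2 * Dfun m s)) (Set.Ioi 0) :=
  Real.continuous_sqrt.comp_continuousOn (continuousOn_const.mul (continuousOn_Dfun hm))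

lemma continuousOn_fpos {m : ℕ} (hm : 1 ≤ m) : ContinuousOn (fpos m) (Set.Ioi 0) :=
  (continuous_PhiG.comp_continuousOn (continuousOn_sqrtD hm)).sub
    (continuous_Spo m).continuousOn

lemma continuousOn_fneg {m : ℕ} (hm : 1 ≤ m) : ContinuousOn (fneg m) (Set.Ioi 0) :=
  (continuous_PhiG.comp_continuousOn (continuousOn_sqrtD hm).neg).sub
    (continuous_Spo m).continuousOn

/-- `fneg` is antitone on `[m, ∞)`. -/
lemma fneg_anti (n : ℕ) : AntitoneOn (fneg (n+1)) (Set.Ici (((n+1:ℕ)):ℝ)) := by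
  have hm : 1 ≤ n + 1 := by omega
  have hmr : (0:ℝ) < ((n+1:ℕ):ℝ) := by positivity
  apply antitoneOn_of_deriv_nonpos (convex_Ici _)
  · exact (continuousOn_fneg hm).mono fun x hx => lt_of_lt_of_le hmr hx
  · intro x hx
    rw [interior_Ici] at hx
    have hx0 : 0 < x := lt_trans hmr hx
    exact ((hasDerivAt_fneg n hx0 (ne_of_gt hx)).differentiableAt).differentiableWithinAt
  · intro x hx
    rw [interior_Ici] at hx
    have hx0 : 0 < x := lt_trans hmr hx
    have hxm : (((n+1:ℕ)):ℝ) < x := hx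
    rw [(hasDerivAt_fneg n hx0 (ne_of_gt hxm)).deriv]
    have hrw : phiG (-Real.sqrt (2 * Dfun (n+1) x)) *
        (-((1 - ((n+1:ℕ):ℝ) / x) / Real.sqrt (2 * Dfun (n+1) x)))
        = phiG (Real.sqrt (2 * Dfun (n+1) x)) *
        ((-1) * ((1 - ((n+1:ℕ):ℝ) / x) / Real.sqrt (2 * Dfun (n+1) x))) := by
      rw [phiG_neg]; ring
    rw [hrw, deriv_decomp n hx0 (ne_of_gt hxm) (-1) (Or.inr rfl)]
    have hh : hpo (n+1) x ≤ 0 := hpo_nonpos_of_ge hm hxm.le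
    have hXY := X_le_Y n hx0 hh
    rw [abs_of_nonpos (by linarith)] at hXY
    have hE : (0:ℝ) ≤ Real.exp (-x) * x ^ n /
        ((Nat.factorial n : ℝ) * (((n+1:ℕ):ℝ) ^ (n+1) * Real.sqrt (2 * Real.pi) *
          Real.sqrt (2 * Dfun (n+1) x))) := by positivity
    apply mul_nonpos_of_nonneg_of_nonpos hE
    nlinarith [hXY]

/-- `fpos` is antitone on `[a, m]` when `hpo a ≤ 0`. -/
lemma fpos_anti (n : ℕ) {a : ℝ} (ha : 0 < a) (ham : a ≤ ((n+1:ℕ):ℝ))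
    (hh : hpo (n+1) a ≤ 0) :
    AntitoneOn (fpos (n+1)) (Set.Icc a (((n+1:ℕ)):ℝ)) := by
  have hm : 1 ≤ n + 1 := by omega
  apply antitoneOn_of_deriv_nonpos (convex_Icc _ _)
  · exact (continuousOn_fpos hm).mono fun x hx => lt_of_lt_of_le ha hx.1
  · intro x hx
    rw [interior_Icc] at hx
    have hx0 : 0 < x := lt_trans ha hx.1
    exact ((hasDerivAt_fpos n hx0 (ne_of_lt hx.2)).differentiableAt).differentiableWithinAt
  · intro x hx
    rw [interior_Icc] at hx
    have hx0 : 0 < x := lt_trans ha hx.1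
    have hxm : x < ((n+1:ℕ):ℝ) := hx.2
    rw [(hasDerivAt_fpos n hx0 (ne_of_lt hxm)).deriv]
    have hrw : phiG (Real.sqrt (2 * Dfun (n+1) x)) *
        ((1 - ((n+1:ℕ):ℝ) / x) / Real.sqrt (2 * Dfun (n+1) x))
        = phiG (Real.sqrt (2 * Dfun (n+1) x)) *
        ((1:ℝ) * ((1 - ((n+1:ℕ):ℝ) / x) / Real.sqrt (2 * Dfun (n+1) x))) := by ring
    rw [hrw, deriv_decomp n hx0 (ne_of_lt hxm) 1 (Or.inl rfl)]
    have hhx : hpo (n+1) x ≤ 0 := hpo_nonpos_forward hm ha hh x hx.1.le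
    have hXY := X_le_Y n hx0 hhx
    rw [abs_of_nonneg (by linarith)] at hXY
    have hE : (0:ℝ) ≤ Real.exp (-x) * x ^ n /
        ((Nat.factorial n : ℝ) * (((n+1:ℕ):ℝ) ^ (n+1) * Real.sqrt (2 * Real.pi) *
          Real.sqrt (2 * Dfun (n+1) x))) := by positivity
    apply mul_nonpos_of_nonneg_of_nonpos hE
    nlinarith [hXY]

/-- `fpos` is monotone on `[a, t]` when `hpo > 0` on `(0, t]`. -/
lemma fpos_mono (n : ℕ) {a t : ℝ} (ha : 0 < a) (hat : a ≤ t) (htm : t < ((n+1:ℕ):ℝ))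
    (hh : ∀ s, 0 < s → s ≤ t → 0 < hpo (n+1) s) :
    MonotoneOn (fpos (n+1)) (Set.Icc a t) := by
  have hm : 1 ≤ n + 1 := by omega
  apply monotoneOn_of_deriv_nonneg (convex_Icc _ _)
  · exact (continuousOn_fpos hm).mono fun x hx => lt_of_lt_of_le ha hx.1
  · intro x hx
    rw [interior_Icc] at hx
    have hx0 : 0 < x := lt_trans ha hx.1
    have hxm : x < ((n+1:ℕ):ℝ) := lt_trans hx.2 htm
    exact ((hasDerivAt_fpos n hx0 (ne_of_lt hxm)).differentiableAt).differentiableWithinAt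
  · intro x hx
    rw [interior_Icc] at hx
    have hx0 : 0 < x := lt_trans ha hx.1
    have hxm : x < ((n+1:ℕ):ℝ) := lt_trans hx.2 htm
    rw [(hasDerivAt_fpos n hx0 (ne_of_lt hxm)).deriv]
    have hrw : phiG (Real.sqrt (2 * Dfun (n+1) x)) *
        ((1 - ((n+1:ℕ):ℝ) / x) / Real.sqrt (2 * Dfun (n+1) x))
        = phiG (Real.sqrt (2 * Dfun (n+1) x)) *
        ((1:ℝ) * ((1 - ((n+1:ℕ):ℝ) / x) / Real.sqrt (2 * Dfun (n+1) x))) := by ring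
    rw [hrw, deriv_decomp n hx0 (ne_of_lt hxm) 1 (Or.inl rfl)]
    have hhx : 0 ≤ hpo (n+1) x := (hh x hx0 hx.2.le).le
    have hXY := Y_le_X n hx0 hhx
    rw [abs_of_nonneg (by linarith)] at hXY
    have hE : (0:ℝ) ≤ Real.exp (-x) * x ^ n /
        ((Nat.factorial n : ℝ) * (((n+1:ℕ):ℝ) ^ (n+1) * Real.sqrt (2 * Real.pi) *
          Real.sqrt (2 * Dfun (n+1) x))) := by positivity
    apply mul_nonneg hE
    nlinarith [hXY]

/-! ### Part I: limits -/

lemma tendsto_sqrt_atTop' : Tendsto Real.sqrt atTop atTop := by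
  apply tendsto_atTop_atTop.mpr
  intro b
  refine ⟨max (b^2) 0, fun a ha => ?_⟩
  have h1 : b^2 ≤ a := le_trans (le_max_left _ _) ha
  have h2 : 0 ≤ a := le_trans (le_max_right _ _) ha
  calc b ≤ |b| := le_abs_self b
    _ = Real.sqrt (b^2) := (Real.sqrt_sq_eq_abs b).symm
    _ ≤ Real.sqrt a := Real.sqrt_le_sqrt h1

lemma tendsto_Dfun_atTop {m : ℕ} (hm : 1 ≤ m) : Tendsto (Dfun m) atTop atTop := by
  have hmr : (0:ℝ) < m := by exact_mod_cast hm
  have hlo := Real.isLittleO_log_id_atTop.bound (c := 1 / (2 * m)) (by positivity)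
  apply tendsto_atTop_mono' _ (f₁ := fun s => s / 2 - m + m * Real.log m)
  · filter_upwards [hlo, eventually_ge_atTop (1:ℝ)] with s hls hs1
    have hs0 : 0 < s := by linarith
    have hlog : Real.log (s / m) = Real.log s - Real.log m :=
      Real.log_div (by positivity) (by positivity)
    have habs : |Real.log s| ≤ 1 / (2 * m) * |s| := by simpa using hls
    have hlogs : Real.log s ≤ s / (2 * m) := by
      have h := le_trans (le_abs_self _) habs
      rw [abs_of_nonneg hs0.le] at h
      have he : 1 / (2 * (m:ℝ)) * s = s / (2 * m) := by ring
      linarith [he ▸ h]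
    have : (m:ℝ) * Real.log s ≤ s / 2 := by
      have h2 := mul_le_mul_of_nonneg_left hlogs hmr.le
      have : (m:ℝ) * (s / (2 * m)) = s / 2 := by field_simp
      linarith [this ▸ h2]
    unfold Dfun
    rw [hlog]
    nlinarith
  · apply Filter.Tendsto.atTop_add _ tendsto_const_nhds
    apply Filter.tendsto_atTop_add_const_right
    exact (tendsto_id.atTop_div_const two_pos)

lemma tendsto_fneg_atTop {m : ℕ} (hm : 1 ≤ m) : Tendsto (fneg m) atTop (𝓝 0) := by
  have h1 : Tendsto (fun s => Real.sqrt (2 * Dfun m s)) atTop atTop :=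
    tendsto_sqrt_atTop'.comp ((tendsto_Dfun_atTop hm).const_mul_atTop two_pos)
  have h2 : Tendsto (fun s => -Real.sqrt (2 * Dfun m s)) atTop atBot :=
    tendsto_neg_atTop_atBot.comp h1
  have h3 : Tendsto (fun s => PhiG (-Real.sqrt (2 * Dfun m s))) atTop (𝓝 0) :=
    tendsto_PhiG_atBot.comp h2
  have h4 : Tendsto (fun s => fneg m s) atTop (𝓝 (0 - 0)) := h3.sub (tendsto_Spo_atTop m)
  simpa using h4

lemma tendsto_Dfun_zero {m : ℕ} (hm : 1 ≤ m) : Tendsto (Dfun m) (𝓝[>] 0) atTop := by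
  have hmr : (0:ℝ) < m := by exact_mod_cast hm
  have heq : ∀ s ∈ Set.Ioi (0:ℝ), (s - m) + m * Real.log ((m:ℝ) / s) = Dfun m s := by
    intro s hs
    have hs0 : (0:ℝ) < s := hs
    unfold Dfun
    rw [show (m:ℝ) / s = (s / m)⁻¹ by rw [inv_div], Real.log_inv]
    ring
  have hev : (fun s => (s - (m:ℝ)) + m * Real.log ((m:ℝ) / s)) =ᶠ[𝓝[>] (0:ℝ)] Dfun m :=
    eventually_nhdsWithin_of_forall heq
  refine Tendsto.congr' hev ?_
  have hB : Tendsto (fun s : ℝ => (m:ℝ) * Real.log ((m:ℝ) / s)) (𝓝[>] 0) atTop := by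
    apply Tendsto.const_mul_atTop hmr
    apply tendsto_log_atTop.comp
    have h5 : Tendsto (fun s : ℝ => (m:ℝ) * s⁻¹) (𝓝[>] 0) atTop :=
      (tendsto_inv_nhdsGT_zero).const_mul_atTop hmr
    exact h5.congr fun s => by rw [div_eq_mul_inv]
  have hA : Tendsto (fun s : ℝ => s - (m:ℝ)) (𝓝[>] 0) (𝓝 (0 - m)) :=
    ((continuous_id.sub continuous_const).tendsto 0).mono_left nhdsWithin_le_nhds
  exact hA.add_atTop hB

lemma tendsto_fpos_zero {m : ℕ} (hm : 1 ≤ m) : Tendsto (fpos m) (𝓝[>] 0) (𝓝 0) := by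
  have h1 : Tendsto (fun s => Real.sqrt (2 * Dfun m s)) (𝓝[>] 0) atTop :=
    tendsto_sqrt_atTop'.comp ((tendsto_Dfun_zero hm).const_mul_atTop two_pos)
  have h2 : Tendsto (fun s => PhiG (Real.sqrt (2 * Dfun m s))) (𝓝[>] 0) (𝓝 1) :=
    tendsto_PhiG_atTop.comp h1
  have h3 : Tendsto (Spo m) (𝓝[>] (0:ℝ)) (𝓝 (Spo m 0)) :=
    ((continuous_Spo m).tendsto 0).mono_left nhdsWithin_le_nhds
  rw [Spo_zero m hm] at h3
  have h4 : Tendsto (fun s => fpos m s) (𝓝[>] (0:ℝ)) (𝓝 (1 - 1)) := h2.sub h3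
  simpa using h4

/-! ### Part J: conclusion -/

lemma nonneg_hi (n : ℕ) {t : ℝ} (hmt : ((n+1:ℕ):ℝ) ≤ t) : 0 ≤ fneg (n+1) t := by
  apply le_of_tendsto (tendsto_fneg_atTop (m := n+1) (by omega))
  filter_upwards [eventually_ge_atTop t] with s hs
  exact fneg_anti n hmt (le_trans hmt hs) hs

lemma fpos_eq_fneg_at_m {m : ℕ} (hm : 1 ≤ m) : fpos m (m:ℝ) = fneg m (m:ℝ) := by
  unfold fpos fneg
  rw [Dfun_at_m hm]
  norm_num

lemma nonneg_lo (n : ℕ) {t : ℝ} (ht : 0 < t) (htm : t ≤ ((n+1:ℕ):ℝ)) :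
    0 ≤ fpos (n+1) t := by
  have hm : 1 ≤ n + 1 := by omega
  rcases le_or_gt (hpo (n+1) t) 0 with hle | hpos
  · have h1 : fpos (n+1) ((n+1:ℕ):ℝ) ≤ fpos (n+1) t :=
      fpos_anti n ht htm hle (Set.mem_Icc.mpr ⟨le_refl _, htm⟩)
        (Set.mem_Icc.mpr ⟨htm, le_refl _⟩) htm
    have h2 := nonneg_hi n (t := ((n+1:ℕ):ℝ)) le_rfl
    rw [← fpos_eq_fneg_at_m hm] at h2
    linarith
  · obtain ⟨htm', hall⟩ := hpo_pos_backward hm ht hpos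
    apply le_of_tendsto (tendsto_fpos_zero (m := n+1) hm)
    filter_upwards [Ioc_mem_nhdsGT_of_mem ⟨le_refl (0:ℝ), ht⟩] with a ha
    exact fpos_mono n ha.1 ha.2 htm' hall
      (Set.mem_Icc.mpr ⟨le_refl _, ha.2⟩) (Set.mem_Icc.mpr ⟨ha.2, le_refl _⟩) ha.2

/-- For `M ~ Po(t)` with `t > 0` and every nonnegative integer `m`,
`P(M < m) ≤ Φ(G(m))` where `G(m) = sgn(m-t)·(2(t - m - m ln(t/m)))^{1/2}`
(with `G(0) = -(2t)^{1/2}`) and `Φ` is the standard Gaussian CDF. -/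
theorem poisson_lower_intersection (t : ℝ) (ht : 0 < t) (m : ℕ) (G : ℝ)
    (hG : G = if (m : ℝ) < t then -Real.sqrt (2 * (t - m - m * Real.log (t / m)))
      else Real.sqrt (2 * (t - m - m * Real.log (t / m)))) :
    (∑' k : ℕ, if k < m then Real.exp (-t) * t ^ k / Nat.factorial k else 0)
      ≤ ∫ z in Set.Iic G, Real.exp (-z ^ 2 / 2) / Real.sqrt (2 * Real.pi) := by
  have hsum : (∑' k : ℕ, if k < m then Real.exp (-t) * t ^ k / (Nat.factorial k : ℝ) else 0)
      = Spo m t := by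
    rw [tsum_eq_sum (s := Finset.range m)
      (fun k hk => if_neg fun hlt => hk (Finset.mem_range.mpr hlt))]
    unfold Spo
    apply Finset.sum_congr rfl
    intro k hk
    rw [if_pos (Finset.mem_range.mp hk)]
  rw [hsum]
  show Spo m t ≤ PhiG G
  rcases Nat.eq_zero_or_pos m with rfl | hm
  · have h0 : Spo 0 t = 0 := by simp [Spo]
    rw [h0]
    exact setIntegral_nonneg measurableSet_Iic fun z _ => (phiG_pos z).le
  obtain ⟨n, rfl⟩ : ∃ n, m = n + 1 := ⟨m - 1, (Nat.succ_pred_eq_of_pos hm).symm⟩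
  have hDrw : t - ((n+1:ℕ):ℝ) - ((n+1:ℕ):ℝ) * Real.log (t / ((n+1:ℕ):ℝ)) = Dfun (n+1) t := rfl
  rcases lt_or_ge (((n+1:ℕ):ℝ)) t with hlt | hge
  · rw [hG, if_pos hlt, hDrw]
    have := nonneg_hi n hlt.le
    unfold fneg at this
    linarith
  · rw [hG, if_neg (not_lt.mpr hge), hDrw]
    have := nonneg_lo n ht hge
    unfold fpos at this
    linarith
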